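/- There exist absolute constants 0 < C3 ≤ C4 < ∞ such that for every β > 0 and every real p with 1 ≤ p ≤ 2β one has C3 · β ≤ B(p,β)^{1/p} ≤ C4 · β. -/

import Mathlib

open MeasureTheory ProbabilityTheory Real
open scoped ENNReal

/-- The Bell function `B(p, β) = e^{-β} ∑_{k=0}^∞ k^p β^k / k!`. -/
noncomputable def bellFn (p β : ℝ) : ℝ :=
  Real.exp (-β) * ∑' k : ℕ, (k : ℝ) ^ p * β ^ k / (Nat.factorial k : ℝ)

lemma exp_tsum' (x : ℝ) : ∑' k : ℕ, x ^ k / (Nat.factorial k : ℝ) = Real.exp x := by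
  rw [Real.exp_eq_exp_ℝ, NormedSpace.exp_eq_tsum_div]

lemma aux_rpow_le {p l x : ℝ} (hp : 0 < p) (hl : 0 < l) (hx : 0 ≤ x) :
    x ^ p ≤ (p / l) ^ p * Real.exp (l * x - p) := by
  rcases eq_or_lt_of_le hx with h0 | hx
  · rw [← h0, Real.zero_rpow hp.ne']
    positivity
  · have h2 := Real.add_one_le_exp (l * x / p - 1)
    have h3 : l * x / p ≤ Real.exp (l * x / p - 1) := by linarith
    have h1 : x ≤ (p / l) * Real.exp (l * x / p - 1) := by
      calc x = (p / l) * (l * x / p) := by field_simp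
        _ ≤ (p / l) * Real.exp (l * x / p - 1) :=
            mul_le_mul_of_nonneg_left h3 (by positivity)
    calc x ^ p ≤ ((p / l) * Real.exp (l * x / p - 1)) ^ p :=
          Real.rpow_le_rpow hx.le h1 hp.le
      _ = (p / l) ^ p * Real.exp (l * x - p) := by
          rw [Real.mul_rpow (by positivity) (Real.exp_nonneg _), ← Real.exp_mul]
          congr 1
          field_simp

lemma term_le {β p : ℝ} (hβ : 0 < β) (hp : 1 ≤ p) (k : ℕ) :
    (k : ℝ) ^ p * β ^ k / (Nat.factorial k : ℝ) ≤
      β ^ p * Real.exp (-p) * ((β * Real.exp (p / β)) ^ k / (Nat.factorial k : ℝ)) := by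
  have hp0 : 0 < p := lt_of_lt_of_le one_pos hp
  have hl : 0 < p / β := by positivity
  have h1 : (k : ℝ) ^ p ≤ β ^ p * Real.exp ((p / β) * k - p) := by
    have h2 := aux_rpow_le hp0 hl (Nat.cast_nonneg k : (0:ℝ) ≤ k)
    have h3 : p / (p / β) = β := by
      field_simp
    rwa [h3] at h2
  calc (k : ℝ) ^ p * β ^ k / (Nat.factorial k : ℝ)
      ≤ (β ^ p * Real.exp ((p / β) * k - p)) * β ^ k / (Nat.factorial k : ℝ) := by gcongr
    _ = β ^ p * Real.exp (-p) * ((β * Real.exp (p / β)) ^ k / (Nat.factorial k : ℝ)) := by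
        rw [sub_eq_add_neg, mul_comm ((p/β)) (k:ℝ), Real.exp_add, Real.exp_nat_mul, mul_pow]
        ring

lemma summable_T {β p : ℝ} (hβ : 0 < β) (hp : 1 ≤ p) :
    Summable (fun k : ℕ => (k : ℝ) ^ p * β ^ k / (Nat.factorial k : ℝ)) :=
  Summable.of_nonneg_of_le (fun k => by positivity) (term_le hβ hp)
    ((Real.summable_pow_div_factorial _).mul_left _)

lemma T_le {β p : ℝ} (hβ : 0 < β) (hp : 1 ≤ p) :
    ∑' k : ℕ, (k : ℝ) ^ p * β ^ k / (Nat.factorial k : ℝ) ≤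
      β ^ p * Real.exp (-p) * Real.exp (β * Real.exp (p / β)) := by
  have := Summable.tsum_le_tsum (term_le hβ hp) (summable_T hβ hp)
    ((Real.summable_pow_div_factorial _).mul_left _)
  rwa [tsum_mul_left, exp_tsum'] at this

lemma holder_lower {β p : ℝ} (hβ : 0 < β) (hp1 : 1 < p)
    (hTsum : Summable (fun k : ℕ => (k : ℝ) ^ p * β ^ k / (Nat.factorial k : ℝ))) :
    β * Real.exp β ≤
      (∑' k : ℕ, (k : ℝ) ^ p * β ^ k / (Nat.factorial k : ℝ)) ^ (1/p) *
        (Real.exp β) ^ (1 - 1/p) := by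
  set q : ℝ := p / (p - 1) with hq
  have hp0 : (0:ℝ) < p := lt_trans one_pos hp1
  have hpq : p.HolderConjugate q := (Real.holderConjugate_iff_eq_conjExponent hp1).mpr hq
  set W : ℕ → ℝ≥0∞ := fun k => ENNReal.ofReal (β ^ k / (Nat.factorial k : ℝ)) with hW
  have hWpos : ∀ k, W k ≠ 0 := fun k =>
    (ENNReal.ofReal_pos.mpr (by positivity)).ne'
  have hWtop : ∀ k, W k ≠ ⊤ := fun k => ENNReal.ofReal_ne_top
  set f : ℕ → ℝ≥0∞ := fun k => (k : ℝ≥0∞) * W k ^ (1/p) with hf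
  set g : ℕ → ℝ≥0∞ := fun k => W k ^ (1/q) with hg
  have key := ENNReal.lintegral_mul_le_Lp_mul_Lq Measure.count hpq
    (measurable_of_countable f).aemeasurable (measurable_of_countable g).aemeasurable
  rw [lintegral_count, lintegral_count, lintegral_count] at key
  have hfg : ∀ k, (f * g) k = (k : ℝ≥0∞) * W k := by
    intro k
    show (k : ℝ≥0∞) * W k ^ (1/p) * W k ^ (1/q) = (k : ℝ≥0∞) * W k
    rw [mul_assoc, ← ENNReal.rpow_add _ _ (hWpos k) (hWtop k)]
    rw [one_div, one_div, hpq.inv_add_inv_eq_one, ENNReal.rpow_one]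
  have hfp : ∀ k, f k ^ p = (k : ℝ≥0∞) ^ p * W k := by
    intro k
    show ((k : ℝ≥0∞) * W k ^ (1/p)) ^ p = _
    rw [ENNReal.mul_rpow_of_nonneg _ _ hp0.le, ← ENNReal.rpow_mul,
      one_div, inv_mul_cancel₀ hp0.ne', ENNReal.rpow_one]
  have hgq : ∀ k, g k ^ q = W k := by
    intro k
    show (W k ^ (1/q)) ^ q = W k
    rw [← ENNReal.rpow_mul, one_div, inv_mul_cancel₀ hpq.symm.ne_zero, ENNReal.rpow_one]
  simp only [hfg, hfp, hgq] at key
  have S1 : ∑' k : ℕ, ((k : ℝ≥0∞) * W k) = ENNReal.ofReal (β * Real.exp β) := by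
    have hsum : Summable (fun k : ℕ => (k : ℝ) * (β ^ k / (Nat.factorial k : ℝ))) := by
      refine Summable.of_nonneg_of_le (fun k => by positivity) ?_
        (Real.summable_pow_div_factorial (2 * β))
      intro k
      have h1 : (k : ℝ) ≤ 2 ^ k := by exact_mod_cast (Nat.lt_two_pow_self : k < 2 ^ k).le
      calc (k : ℝ) * (β ^ k / (Nat.factorial k : ℝ))
          ≤ 2 ^ k * (β ^ k / (Nat.factorial k : ℝ)) :=
            mul_le_mul_of_nonneg_right h1 (by positivity)
        _ = (2 * β) ^ k / (Nat.factorial k : ℝ) := by rw [mul_pow]; ring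
    have hval : ∑' k : ℕ, (k : ℝ) * (β ^ k / (Nat.factorial k : ℝ)) = β * Real.exp β := by
      rw [hsum.tsum_eq_zero_add]
      have h : ∀ k : ℕ, ((k + 1 : ℕ) : ℝ) * (β ^ (k + 1) / (Nat.factorial (k + 1) : ℝ))
          = β * (β ^ k / (Nat.factorial k : ℝ)) := by
        intro k
        have hk : (Nat.factorial k : ℝ) ≠ 0 := Nat.cast_ne_zero.mpr (Nat.factorial_ne_zero k)
        rw [Nat.factorial_succ]
        push_cast
        field_simp
        ring
      simp only [h, Nat.cast_zero, zero_mul, zero_add, tsum_mul_left, exp_tsum']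
    rw [← hval, ENNReal.ofReal_tsum_of_nonneg (fun k => by positivity) hsum]
    congr 1
    ext k
    rw [ENNReal.ofReal_mul (Nat.cast_nonneg k), ENNReal.ofReal_natCast]
  have S2 : ∑' k : ℕ, W k = ENNReal.ofReal (Real.exp β) := by
    rw [← exp_tsum' β, ENNReal.ofReal_tsum_of_nonneg (fun k => by positivity)
      (Real.summable_pow_div_factorial β)]
  have S3 : ∑' k : ℕ, ((k : ℝ≥0∞) ^ p * W k)
      = ENNReal.ofReal (∑' k : ℕ, (k : ℝ) ^ p * β ^ k / (Nat.factorial k : ℝ)) := by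
    rw [ENNReal.ofReal_tsum_of_nonneg (fun k => by positivity) hTsum]
    congr 1
    ext k
    rw [mul_div_assoc, ENNReal.ofReal_mul (by positivity),
      ← ENNReal.ofReal_rpow_of_nonneg (Nat.cast_nonneg k) hp0.le, ENNReal.ofReal_natCast]
  rw [S1, S2, S3] at key
  set T : ℝ := ∑' k : ℕ, (k : ℝ) ^ p * β ^ k / (Nat.factorial k : ℝ) with hT
  have hT0 : 0 ≤ T := tsum_nonneg (fun k => by positivity)
  have hq1 : 1/q = 1 - 1/p := by
    have := hpq.inv_add_inv_eq_one
    rw [one_div, one_div]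
    linarith
  rw [ENNReal.ofReal_rpow_of_nonneg hT0 hpq.one_div_nonneg,
    ENNReal.ofReal_rpow_of_nonneg (Real.exp_nonneg β) hpq.symm.one_div_nonneg,
    ← ENNReal.ofReal_mul (by positivity), hq1] at key
  exact (ENNReal.ofReal_le_ofReal_iff (by positivity)).mp key

/-- There are absolute constants `0 < C3 ≤ C4 < ∞` such that for every `β > 0` and
every real `p` with `1 ≤ p ≤ 2β`, `C3 β ≤ B(p,β)^{1/p} ≤ C4 β`. -/
theorem stmt_7 :
    ∃ C3 C4 : ℝ, 0 < C3 ∧ C3 ≤ C4 ∧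
      ∀ β p : ℝ, 0 < β → 1 ≤ p → p ≤ 2 * β →
        C3 * β ≤ bellFn p β ^ (1 / p) ∧ bellFn p β ^ (1 / p) ≤ C4 * β := by
  refine ⟨1, Real.exp (Real.exp 2 - 1), one_pos, ?_, ?_⟩
  · have h2 : (1:ℝ) ≤ Real.exp 2 := Real.one_le_exp (by norm_num)
    calc (1:ℝ) = Real.exp 0 := (Real.exp_zero).symm
      _ ≤ Real.exp (Real.exp 2 - 1) := Real.exp_le_exp.mpr (by linarith)
  intro β p hβ hp hpβ
  set C4 : ℝ := Real.exp (Real.exp 2 - 1) with hC4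
  have hp0 : (0:ℝ) < p := lt_of_lt_of_le one_pos hp
  set T : ℝ := ∑' k : ℕ, (k : ℝ) ^ p * β ^ k / (Nat.factorial k : ℝ) with hT
  have hT0 : 0 ≤ T := tsum_nonneg (fun k => by positivity)
  have hbell : bellFn p β = Real.exp (-β) * T := rfl
  have hBell0 : 0 ≤ bellFn p β := by rw [hbell]; positivity
  constructor
  · -- lower bound
    rw [one_mul]
    rcases eq_or_lt_of_le hp with hp1 | hp1
    · -- p = 1
      have hTval : T = β * Real.exp β := by
        have h1 : ∀ k : ℕ, (k : ℝ) ^ p * β ^ k / (Nat.factorial k : ℝ)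
            = (k : ℝ) * (β ^ k / (Nat.factorial k : ℝ)) := by
          intro k
          rw [← hp1, Real.rpow_one, mul_div_assoc]
        have hsum : Summable (fun k : ℕ => (k : ℝ) * (β ^ k / (Nat.factorial k : ℝ))) := by
          refine Summable.of_nonneg_of_le (fun k => by positivity) ?_
            (Real.summable_pow_div_factorial (2 * β))
          intro k
          have hcast : (k : ℝ) ≤ 2 ^ k := by exact_mod_cast (Nat.lt_two_pow_self : k < 2 ^ k).le
          calc (k : ℝ) * (β ^ k / (Nat.factorial k : ℝ))
              ≤ 2 ^ k * (β ^ k / (Nat.factorial k : ℝ)) :=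
                mul_le_mul_of_nonneg_right hcast (by positivity)
            _ = (2 * β) ^ k / (Nat.factorial k : ℝ) := by rw [mul_pow]; ring
        rw [hT]
        rw [tsum_congr h1, hsum.tsum_eq_zero_add]
        have h : ∀ k : ℕ, ((k + 1 : ℕ) : ℝ) * (β ^ (k + 1) / (Nat.factorial (k + 1) : ℝ))
            = β * (β ^ k / (Nat.factorial k : ℝ)) := by
          intro k
          have hk : (Nat.factorial k : ℝ) ≠ 0 := Nat.cast_ne_zero.mpr (Nat.factorial_ne_zero k)
          rw [Nat.factorial_succ]
          push_cast
          field_simp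
          ring
        simp only [h, Nat.cast_zero, zero_mul, zero_add, tsum_mul_left, exp_tsum']
      have hbellval : bellFn p β = β := by
        rw [hbell, hTval, ← mul_assoc, mul_comm (Real.exp (-β)) β, mul_assoc,
          ← Real.exp_add, neg_add_cancel, Real.exp_zero, mul_one]
      rw [hbellval, ← hp1]
      norm_num
    · -- 1 < p
      have hH := holder_lower hβ hp1 (summable_T hβ hp)
      rw [← hT] at hH
      have hexp : (Real.exp β) ^ (1 - 1/p) = Real.exp (β * (1 - 1/p)) := by
        rw [← Real.exp_mul]
      rw [hexp] at hH
      have h6 : β * Real.exp (β * (1/p)) ≤ T ^ (1/p) := by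
        have h7 := (div_le_iff₀ (Real.exp_pos (β * (1 - 1/p)))).mpr hH
        calc β * Real.exp (β * (1/p))
            = β * Real.exp β / Real.exp (β * (1 - 1/p)) := by
              rw [mul_div_assoc, ← Real.exp_sub]
              congr 2
              ring
          _ ≤ T ^ (1/p) := h7
      have h8 : bellFn p β ^ (1/p) = Real.exp (-β * (1/p)) * T ^ (1/p) := by
        rw [hbell, Real.mul_rpow (Real.exp_nonneg _) hT0, ← Real.exp_mul]
      rw [h8]
      calc β = Real.exp (-β * (1/p)) * (β * Real.exp (β * (1/p))) := by
            rw [mul_comm (Real.exp (-β * (1/p))), mul_assoc, ← Real.exp_add]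
            have : -β * (1/p) + β * (1/p) = 0 := by ring
            rw [add_comm, this, Real.exp_zero, mul_one]
        _ ≤ Real.exp (-β * (1/p)) * T ^ (1/p) :=
            mul_le_mul_of_nonneg_left h6 (Real.exp_pos _).le
  · -- upper bound
    have hl2 : p / β ≤ 2 := by rw [div_le_iff₀ hβ]; linarith
    have hlexp : Real.exp (p / β) - 1 ≤ (p / β) * Real.exp (p / β) := by
      have ha := Real.add_one_le_exp (-(p / β))
      have hb : Real.exp (-(p / β)) * Real.exp (p / β) = 1 := by
        rw [← Real.exp_add, neg_add_cancel, Real.exp_zero]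
      nlinarith [Real.exp_pos (p / β), mul_le_mul_of_nonneg_right ha (Real.exp_pos (p / β)).le]
    have hBexp : β * Real.exp (p / β) ≤ β + p * Real.exp 2 := by
      have h1 : β * (Real.exp (p / β) - 1) ≤ β * ((p / β) * Real.exp (p / β)) :=
        mul_le_mul_of_nonneg_left hlexp hβ.le
      have h2 : β * ((p / β) * Real.exp (p / β)) = p * Real.exp (p / β) := by
        field_simp
      have h3 : p * Real.exp (p / β) ≤ p * Real.exp 2 :=
        mul_le_mul_of_nonneg_left (Real.exp_le_exp.mpr hl2) hp0.le
      nlinarith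
    have hbell_le : bellFn p β ≤ (C4 * β) ^ p := by
      rw [hbell]
      calc Real.exp (-β) * T
          ≤ Real.exp (-β) * (β ^ p * Real.exp (-p) * Real.exp (β * Real.exp (p / β))) :=
            mul_le_mul_of_nonneg_left (T_le hβ hp) (Real.exp_pos _).le
        _ = β ^ p * Real.exp (β * Real.exp (p / β) - β - p) := by
            rw [show β * Real.exp (p / β) - β - p = -β + (-p + β * Real.exp (p / β)) by ring,
              Real.exp_add, Real.exp_add]
            ring
        _ ≤ β ^ p * Real.exp ((Real.exp 2 - 1) * p) := by
            apply mul_le_mul_of_nonneg_left _ (Real.rpow_nonneg hβ.le p)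
            apply Real.exp_le_exp.mpr
            nlinarith
        _ = (C4 * β) ^ p := by
            rw [Real.mul_rpow (Real.exp_nonneg _) hβ.le, ← Real.exp_mul]
            ring
    have hfinal := Real.rpow_le_rpow hBell0 hbell_le (by positivity : (0:ℝ) ≤ 1/p)
    rwa [← Real.rpow_mul (by positivity : (0:ℝ) ≤ C4 * β),
      mul_one_div_cancel hp0.ne', Real.rpow_one] at hfinal
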